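/- Let λ > a > 0, c > 0, ĉ > 0, σ > 0, C̄ > 0, C̃ > 0, β ∈ (0,1], u₀ ≥ 0, and let h : (−∞,0] → [0,∞) be continuous such that s ↦ exp(a·s)h(s) and s ↦ exp(λs)(−s)^{β−1}h(s) are integrable on (−∞,0). Define γ(t) := c·exp(−λt)·u₀ + σĉ·exp(−λt)·h(−t) + c·C̄/λ + σC̃ ∫_{−t}^{0} exp(λr)(−r)^{β−1} h(r) dr for t ≥ 0. Then for every t ≥ 0: γ(t) + a ∫₀ᵗ exp(−(λ−a)(t−s)) γ(s) ds ≤ exp(−(λ−a)t)·(2c·u₀ + σĉ·h(−t)) + c·C̄/(λ−a) + a·σĉ ∫_{−∞}^{0} exp(a·s) h(s) ds + (σC̃λ/(λ−a)) ∫_{−∞}^{0} exp(λs)(−s)^{β−1} h(s) ds. -/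

import Mathlib

open MeasureTheory

private lemma exp_integral_aux (k t : ℝ) (hk : k ≠ 0) :
    ∫ s in (0:ℝ)..t, Real.exp (k * s) = (Real.exp (k * t) - 1) / k := by
  have h1 : ∀ x ∈ Set.uIcc (0:ℝ) t,
      HasDerivAt (fun x => Real.exp (k * x) / k) (Real.exp (k * x)) x := by
    intro x _
    have h0 : HasDerivAt (fun x : ℝ => k * x) k x := by simpa using (hasDerivAt_id x).const_mul k
    have := (Real.hasDerivAt_exp (k * x)).comp x h0
    have h2 := this.div_const k
    simpa [mul_div_assoc, mul_div_cancel_right₀, hk] using h2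
  have h2 : IntervalIntegrable (fun s => Real.exp (k * s)) volume 0 t :=
    (Real.continuous_exp.comp (continuous_const.mul continuous_id)).intervalIntegrable 0 t
  rw [intervalIntegral.integral_eq_sub_of_hasDerivAt h1 h2]
  simp [mul_comm]
  ring

/-- quantitative estimate behind the pullback absorbing set. -/
theorem stmt7 (lam a c chat σ Cbar Ctil β u₀ : ℝ)
    (hlama : a < lam) (ha : 0 < a) (hc : 0 < c) (hchat : 0 < chat)
    (hσ : 0 < σ) (hCbar : 0 < Cbar) (hCtil : 0 < Ctil)
    (hβ : 0 < β) (hβ1 : β ≤ 1) (hu₀ : 0 ≤ u₀)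
    (h : ℝ → ℝ) (hcont : ContinuousOn h (Set.Iic 0))
    (hnonneg : ∀ s : ℝ, s ≤ 0 → 0 ≤ h s)
    (hint1 : IntegrableOn (fun s => Real.exp (a * s) * h s) (Set.Iio 0))
    (hint2 : IntegrableOn (fun s => Real.exp (lam * s) * (-s) ^ (β - 1) * h s)
      (Set.Iio 0))
    (γ : ℝ → ℝ)
    (hγ : ∀ t : ℝ, γ t =
      c * Real.exp (-lam * t) * u₀ + σ * chat * Real.exp (-lam * t) * h (-t)
      + c * Cbar / lam
      + σ * Ctil * ∫ r in (-t)..(0:ℝ), Real.exp (lam * r) * (-r) ^ (β - 1) * h r) :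
    ∀ t : ℝ, 0 ≤ t →
      γ t + a * (∫ s in (0:ℝ)..t, Real.exp (-(lam - a) * (t - s)) * γ s) ≤
        Real.exp (-(lam - a) * t) * (2 * c * u₀ + σ * chat * h (-t))
        + c * Cbar / (lam - a)
        + a * σ * chat * (∫ s in Set.Iio (0:ℝ), Real.exp (a * s) * h s)
        + (σ * Ctil * lam / (lam - a)) *
            ∫ s in Set.Iio (0:ℝ), Real.exp (lam * s) * (-s) ^ (β - 1) * h s := by
  intro t ht
  have hμ : 0 < lam - a := by linarith
  have hlam : 0 < lam := ha.trans hlama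
  set f₁ : ℝ → ℝ := fun s => Real.exp (a * s) * h s with hf₁def
  set f₂ : ℝ → ℝ := fun r => Real.exp (lam * r) * (-r) ^ (β - 1) * h r with hf₂def
  have hf₁nn : ∀ r ∈ Set.Iic (0:ℝ), 0 ≤ f₁ r := fun r hr =>
    mul_nonneg (Real.exp_nonneg _) (hnonneg r hr)
  have hf₂nn : ∀ r ∈ Set.Iic (0:ℝ), 0 ≤ f₂ r := fun r hr =>
    mul_nonneg (mul_nonneg (Real.exp_nonneg _)
      (Real.rpow_nonneg (neg_nonneg.2 hr) _)) (hnonneg r hr)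
  have hae : (Set.Iio (0:ℝ)) =ᵐ[volume] Set.Iic (0:ℝ) := Iio_ae_eq_Iic
  have hint1' : IntegrableOn f₁ (Set.Iic 0) := hint1.congr_set_ae hae.symm
  have hint2' : IntegrableOn f₂ (Set.Iic 0) := hint2.congr_set_ae hae.symm
  set J₁ := ∫ s in Set.Iio (0:ℝ), f₁ s with hJ₁def
  set J₂ := ∫ s in Set.Iio (0:ℝ), f₂ s with hJ₂def
  -- key : bounds on partial integrals
  have key : ∀ i : ℝ → ℝ, IntegrableOn i (Set.Iic 0) → (∀ r ∈ Set.Iic (0:ℝ), 0 ≤ i r) →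
      ∀ s : ℝ, 0 ≤ s → 0 ≤ (∫ r in (-s)..(0:ℝ), i r) ∧
        (∫ r in (-s)..(0:ℝ), i r) ≤ ∫ r in Set.Iio (0:ℝ), i r := by
    intro i hi hinn s hs
    have hns : (-s : ℝ) ≤ 0 := neg_nonpos.2 hs
    rw [intervalIntegral.integral_of_le hns]
    have hsub : Set.Ioc (-s) (0:ℝ) ⊆ Set.Iic 0 := fun x hx => hx.2
    constructor
    · exact setIntegral_nonneg measurableSet_Ioc (fun x hx => hinn x (hsub hx))
    · have h1 : (∫ r in Set.Ioc (-s) (0:ℝ), i r) ≤ ∫ r in Set.Iic (0:ℝ), i r :=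
        setIntegral_mono_set hi (ae_restrict_of_forall_mem measurableSet_Iic hinn)
          (HasSubset.Subset.eventuallyLE hsub)
      rw [setIntegral_congr_set hae]
      exact h1
  have hJ₂0 : 0 ≤ J₂ :=
    setIntegral_nonneg measurableSet_Iio (fun x hx => hf₂nn x (le_of_lt (Set.mem_Iio.mp hx)))
  -- interval integrability of f₂ on nonpositive intervals
  have hii : ∀ x y : ℝ, x ≤ 0 → y ≤ 0 → IntervalIntegrable f₂ volume x y := by
    intro x y hx hy
    rw [intervalIntegrable_iff]
    refine hint2'.mono_set (fun z hz => ?_)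
    exact le_trans hz.2 (max_le hx hy)
  -- continuity of the primitive
  have hP : ContinuousOn (fun x => ∫ r in Set.Ioc (-t) x, f₂ r) (Set.Icc (-t) 0) :=
    intervalIntegral.continuousOn_primitive (hint2'.mono_set Set.Icc_subset_Iic_self)
  have hmaps : Set.MapsTo (fun s : ℝ => -s) (Set.Icc (0:ℝ) t) (Set.Icc (-t) 0) :=
    fun s hs => ⟨neg_le_neg hs.2, neg_nonpos.2 hs.1⟩
  have hF₂ : ContinuousOn (fun s : ℝ => ∫ r in (-s)..(0:ℝ), f₂ r) (Set.Icc 0 t) := by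
    have hc1 : ContinuousOn
        (fun s : ℝ => (∫ r in Set.Ioc (-t) (0:ℝ), f₂ r) - ∫ r in Set.Ioc (-t) (-s), f₂ r)
        (Set.Icc 0 t) :=
      continuousOn_const.sub (hP.comp (continuous_neg.continuousOn) hmaps)
    refine hc1.congr (fun s hs => ?_)
    have hs0 : (0:ℝ) ≤ s := hs.1
    have hst : s ≤ t := hs.2
    have h1 : (∫ r in Set.Ioc (-t) (0:ℝ), f₂ r) = ∫ r in (-t)..(0:ℝ), f₂ r :=
      (intervalIntegral.integral_of_le (by linarith)).symm
    have h2 : (∫ r in Set.Ioc (-t) (-s), f₂ r) = ∫ r in (-t)..(-s), f₂ r :=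
      (intervalIntegral.integral_of_le (by linarith)).symm
    beta_reduce
    rw [h1, h2, intervalIntegral.integral_interval_sub_left
      (hii (-t) 0 (by linarith) le_rfl) (hii (-t) (-s) (by linarith) (by linarith))]
  -- continuity of h ∘ neg
  have hhc : ContinuousOn (fun s : ℝ => h (-s)) (Set.Icc 0 t) :=
    hcont.comp continuous_neg.continuousOn (fun s hs => neg_nonpos.2 hs.1)
  -- continuity of γ
  have hγc : ContinuousOn γ (Set.Icc 0 t) := by
    have hc2 : ContinuousOn (fun s : ℝ =>
        c * Real.exp (-lam * s) * u₀ + σ * chat * Real.exp (-lam * s) * h (-s)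
        + c * Cbar / lam + σ * Ctil * ∫ r in (-s)..(0:ℝ), f₂ r) (Set.Icc 0 t) := by
      refine ContinuousOn.add (ContinuousOn.add (ContinuousOn.add ?_ ?_) continuousOn_const)
        (continuousOn_const.mul hF₂)
      · exact ((continuousOn_const.mul
          ((Real.continuous_exp.comp (continuous_const.mul continuous_id)).continuousOn)).mul
          continuousOn_const)
      · exact (continuousOn_const.mul
          ((Real.continuous_exp.comp (continuous_const.mul continuous_id)).continuousOn)).mul hhc
    exact hc2.congr (fun s _ => hγ s)
  set D := c * Cbar / lam + σ * Ctil * J₂ with hDdef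
  have hD0 : 0 ≤ D := by positivity
  -- pointwise bound on γ
  have hγle : ∀ s ∈ Set.Icc (0:ℝ) t, γ s ≤
      c * Real.exp (-lam * s) * u₀ + σ * chat * Real.exp (-lam * s) * h (-s) + D := by
    intro s hs
    rw [hγ s, hDdef]
    have := (key f₂ hint2' hf₂nn s hs.1).2
    nlinarith [hσ.le, hCtil.le, mul_le_mul_of_nonneg_left this (mul_nonneg hσ.le hCtil.le)]
  -- the majorant q
  set q : ℝ → ℝ := fun s =>
      c * u₀ * (Real.exp (-(lam - a) * t) * Real.exp (-a * s))
      + σ * chat * (Real.exp (-(lam - a) * t) * (Real.exp (-a * s) * h (-s)))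
      + D * Real.exp (-(lam - a) * (t - s)) with hqdef
  have hptwise : ∀ s ∈ Set.Icc (0:ℝ) t,
      Real.exp (-(lam - a) * (t - s)) * γ s ≤ q s := by
    intro s hs
    have e1 : Real.exp (-(lam - a) * (t - s)) * Real.exp (-lam * s)
        = Real.exp (-(lam - a) * t) * Real.exp (-a * s) := by
      rw [← Real.exp_add, ← Real.exp_add]; ring_nf
    calc Real.exp (-(lam - a) * (t - s)) * γ s
        ≤ Real.exp (-(lam - a) * (t - s)) *
          (c * Real.exp (-lam * s) * u₀ + σ * chat * Real.exp (-lam * s) * h (-s) + D) :=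
          mul_le_mul_of_nonneg_left (hγle s hs) (Real.exp_nonneg _)
      _ = q s := by
          rw [hqdef]
          dsimp only
          linear_combination (c * u₀ + σ * chat * h (-s)) * e1
  -- integrability of both sides
  have hcexp : ∀ k : ℝ, Continuous (fun s : ℝ => Real.exp (k * s)) :=
    fun k => Real.continuous_exp.comp (continuous_const.mul continuous_id)
  have hGc : Continuous (fun s : ℝ => Real.exp (-(lam - a) * (t - s))) := by
    exact Real.continuous_exp.comp (continuous_const.mul (continuous_const.sub continuous_id))
  have huIcc : Set.uIcc (0:ℝ) t = Set.Icc 0 t := Set.uIcc_of_le ht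
  have hGγint : IntervalIntegrable (fun s => Real.exp (-(lam - a) * (t - s)) * γ s) volume 0 t := by
    apply ContinuousOn.intervalIntegrable
    rw [huIcc]
    exact hGc.continuousOn.mul hγc
  have hq1int : IntervalIntegrable
      (fun s : ℝ => c * u₀ * (Real.exp (-(lam - a) * t) * Real.exp (-a * s))) volume 0 t :=
    (Continuous.intervalIntegrable (continuous_const.mul (continuous_const.mul (hcexp (-a)))) 0 t)
  have hq2int : IntervalIntegrable
      (fun s : ℝ => σ * chat * (Real.exp (-(lam - a) * t) * (Real.exp (-a * s) * h (-s))))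
      volume 0 t := by
    apply ContinuousOn.intervalIntegrable
    rw [huIcc]
    exact (continuousOn_const.mul (continuousOn_const.mul
      (((hcexp (-a)).continuousOn).mul hhc)))
  have hq3int : IntervalIntegrable
      (fun s : ℝ => D * Real.exp (-(lam - a) * (t - s))) volume 0 t :=
    (Continuous.intervalIntegrable (continuous_const.mul hGc) 0 t)
  have hqint : IntervalIntegrable q volume 0 t := by
    rw [hqdef]
    exact (hq1int.add hq2int).add hq3int
  -- the main integral inequality
  have hmono : (∫ s in (0:ℝ)..t, Real.exp (-(lam - a) * (t - s)) * γ s)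
      ≤ ∫ s in (0:ℝ)..t, q s :=
    intervalIntegral.integral_mono_on ht hGγint hqint hptwise
  -- compute ∫ q
  have hsplit : (∫ s in (0:ℝ)..t, q s)
      = c * u₀ * (Real.exp (-(lam - a) * t) * ∫ s in (0:ℝ)..t, Real.exp (-a * s))
      + σ * chat * (Real.exp (-(lam - a) * t) * ∫ s in (0:ℝ)..t, Real.exp (-a * s) * h (-s))
      + D * ∫ s in (0:ℝ)..t, Real.exp (-(lam - a) * (t - s)) := by
    rw [hqdef]
    rw [intervalIntegral.integral_add (hq1int.add hq2int) hq3int,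
      intervalIntegral.integral_add hq1int hq2int,
      intervalIntegral.integral_const_mul, intervalIntegral.integral_const_mul,
      intervalIntegral.integral_const_mul, intervalIntegral.integral_const_mul,
      intervalIntegral.integral_const_mul]
  -- I1
  have hI1 : (∫ s in (0:ℝ)..t, Real.exp (-a * s)) = (1 - Real.exp (-a * t)) / a := by
    rw [exp_integral_aux (-a) t (by linarith),
      div_eq_div_iff (show (-a:ℝ) ≠ 0 by linarith) (show (a:ℝ) ≠ 0 by linarith)]
    ring
  -- I2 : substitution
  have hI2 : (∫ s in (0:ℝ)..t, Real.exp (-a * s) * h (-s)) = ∫ u in (-t)..(0:ℝ), f₁ u := by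
    have := intervalIntegral.integral_comp_neg (a := 0) (b := t) f₁
    simp only [hf₁def, neg_zero] at this ⊢
    rw [← this]
    apply intervalIntegral.integral_congr
    intro s _
    simp [mul_comm, neg_mul, mul_neg]
  -- I3
  have hI3 : (∫ s in (0:ℝ)..t, Real.exp (-(lam - a) * (t - s)))
      = (1 - Real.exp (-(lam - a) * t)) / (lam - a) := by
    have hcong : ∀ s ∈ Set.uIcc (0:ℝ) t, Real.exp (-(lam - a) * (t - s))
        = Real.exp (-(lam - a) * t) * Real.exp ((lam - a) * s) := by
      intro s _
      rw [← Real.exp_add]; ring_nf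
    rw [intervalIntegral.integral_congr hcong, intervalIntegral.integral_const_mul,
      exp_integral_aux (lam - a) t (by linarith)]
    have hE : Real.exp (-(lam - a) * t) * Real.exp ((lam - a) * t) = 1 := by
      rw [← Real.exp_add]; ring_nf; exact Real.exp_zero
    rw [← mul_div_assoc]
    congr 1
    linear_combination hE
  -- bounds for the pieces
  set X := Real.exp (-(lam - a) * t) with hXdef
  have hX0 : 0 < X := Real.exp_pos _
  have hX1 : X ≤ 1 := by
    rw [hXdef]
    have : -(lam - a) * t ≤ 0 := by nlinarith
    calc Real.exp (-(lam - a) * t) ≤ Real.exp 0 := Real.exp_le_exp.2 this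
      _ = 1 := Real.exp_zero
  have hY0 : 0 ≤ Real.exp (-a * t) := Real.exp_nonneg _
  have hR := key f₁ hint1' hf₁nn t ht
  have hS := key f₂ hint2' hf₂nn t ht
  have hZX : Real.exp (-lam * t) ≤ X := by
    rw [hXdef]
    apply Real.exp_le_exp.2
    nlinarith
  have hH : 0 ≤ h (-t) := hnonneg (-t) (neg_nonpos.2 ht)
  -- bound γ t
  have hγt : γ t ≤ c * X * u₀ + σ * chat * X * h (-t) + c * Cbar / lam + σ * Ctil * J₂ := by
    rw [hγ t]
    have b1 : c * Real.exp (-lam * t) * u₀ ≤ c * X * u₀ :=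
      mul_le_mul_of_nonneg_right (mul_le_mul_of_nonneg_left hZX hc.le) hu₀
    have b2 : σ * chat * Real.exp (-lam * t) * h (-t) ≤ σ * chat * X * h (-t) :=
      mul_le_mul_of_nonneg_right (mul_le_mul_of_nonneg_left hZX (mul_nonneg hσ.le hchat.le)) hH
    have b3 : σ * Ctil * (∫ r in (-t)..(0:ℝ), f₂ r) ≤ σ * Ctil * J₂ :=
      mul_le_mul_of_nonneg_left hS.2 (mul_nonneg hσ.le hCtil.le)
    linarith
  -- bound the integral term
  have hIub : a * (∫ s in (0:ℝ)..t, Real.exp (-(lam - a) * (t - s)) * γ s)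
      ≤ c * u₀ * X + a * σ * chat * J₁ + a * D / (lam - a) := by
    have h1 : a * (∫ s in (0:ℝ)..t, Real.exp (-(lam - a) * (t - s)) * γ s)
        ≤ a * ∫ s in (0:ℝ)..t, q s := mul_le_mul_of_nonneg_left hmono ha.le
    rw [hsplit, hI1, hI2, hI3] at h1
    have hR0 := hR.1
    have hRJ := hR.2
    have haX : a * (c * u₀ * (X * ((1 - Real.exp (-a * t)) / a))) ≤ c * u₀ * X := by
      have e : a * (c * u₀ * (X * ((1 - Real.exp (-a * t)) / a)))
          = c * u₀ * X * (1 - Real.exp (-a * t)) := by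
        field_simp
      have b : c * u₀ * X * (1 - Real.exp (-a * t)) ≤ c * u₀ * X * 1 :=
        mul_le_mul_of_nonneg_left (by linarith) (by positivity)
      rw [e]
      linarith [b]
    have hbX : a * (σ * chat * (X * (∫ u in (-t)..(0:ℝ), f₁ u))) ≤ a * σ * chat * J₁ := by
      have h2 : X * (∫ u in (-t)..(0:ℝ), f₁ u) ≤ J₁ := by
        have := mul_le_mul hX1 hRJ hR0 zero_le_one
        simpa using this
      calc a * (σ * chat * (X * (∫ u in (-t)..(0:ℝ), f₁ u)))
          = (a * σ * chat) * (X * (∫ u in (-t)..(0:ℝ), f₁ u)) := by ring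
        _ ≤ (a * σ * chat) * J₁ := mul_le_mul_of_nonneg_left h2 (by positivity)
        _ = a * σ * chat * J₁ := by ring
    have hcX : a * (D * ((1 - X) / (lam - a))) ≤ a * D / (lam - a) := by
      have h1 : a * (D * ((1 - X) / (lam - a))) = a * D * (1 - X) / (lam - a) := by ring
      rw [h1]
      have h2 : a * D * (1 - X) ≤ a * D * 1 :=
        mul_le_mul_of_nonneg_left (by linarith) (by positivity)
      have h3 : a * D * (1 - X) ≤ a * D := by linarith
      exact (div_le_div_iff_of_pos_right hμ).mpr h3
    have hfin : a * (c * u₀ * (X * ((1 - Real.exp (-a * t)) / a))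
        + σ * chat * (X * (∫ u in (-t)..(0:ℝ), f₁ u))
        + D * ((1 - X) / (lam - a)))
        ≤ c * u₀ * X + a * σ * chat * J₁ + a * D / (lam - a) := by
      rw [mul_add, mul_add]
      linarith [haX, hbX, hcX]
    calc a * (∫ s in (0:ℝ)..t, Real.exp (-(lam - a) * (t - s)) * γ s)
        ≤ a * (c * u₀ * (X * ((1 - Real.exp (-a * t)) / a))
          + σ * chat * (X * (∫ u in (-t)..(0:ℝ), f₁ u))
          + D * ((1 - X) / (lam - a))) := by
          exact h1
      _ ≤ _ := hfin
  -- final combination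
  have heqD : c * Cbar / lam + σ * Ctil * J₂ + a * D / (lam - a)
      = c * Cbar / (lam - a) + σ * Ctil * lam / (lam - a) * J₂ := by
    rw [hDdef]
    field_simp
    ring
  have hfinal := add_le_add hγt hIub
  calc γ t + a * (∫ s in (0:ℝ)..t, Real.exp (-(lam - a) * (t - s)) * γ s)
      ≤ (c * X * u₀ + σ * chat * X * h (-t) + c * Cbar / lam + σ * Ctil * J₂)
        + (c * u₀ * X + a * σ * chat * J₁ + a * D / (lam - a)) := hfinal
    _ = X * (2 * c * u₀ + σ * chat * h (-t)) + c * Cbar / (lam - a)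
        + a * σ * chat * J₁ + σ * Ctil * lam / (lam - a) * J₂ := by
        linear_combination heqD
    _ = _ := by rw [hXdef, hJ₁def, hJ₂def]
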